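/- For every positive integer n, T(2,n) equals the number of ordered pairs (π,ρ) of Dyck paths of total length 2n with |h(π) − h(ρ)| ≤ 1, where π and ρ may be empty and the empty path has height 0. -/

import Mathlib

/-- The value `±1` of an up/down step (`true` is up). -/
def stepVal (b : Bool) : ℤ := if b then 1 else -1

/-- The level (y-coordinate) of the path `p` after `k` steps. -/
def lvl (p : List Bool) (k : ℕ) : ℤ := ((p.take k).map stepVal).sum

/-- `p` is a Dyck path: it ends on the x-axis and never goes below it. -/
def IsDyck (p : List Bool) : Prop :=
  lvl p p.length = 0 ∧ ∀ k ≤ p.length, 0 ≤ lvl p k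

/-- The super Catalan number `T(m,n)` as a rational number. -/
def T (m n : ℕ) : ℚ :=
  (Nat.factorial (2 * m) * Nat.factorial (2 * n) : ℚ) /
    (2 * (Nat.factorial m * Nat.factorial n * Nat.factorial (m + n)))

/-- The height of a Dyck path: the maximum level attained. -/
def hgt (p : List Bool) : ℤ :=
  (((List.range (p.length + 1)).map (lvl p)).foldr max 0)

open Finset

namespace SuperCat

/-! ### Basic level lemmas -/

lemma lvl_zero (p : List Bool) : lvl p 0 = 0 := by simp [lvl]

lemma lvl_cons (b : Bool) (p : List Bool) (k : ℕ) :
    lvl (b :: p) (k+1) = stepVal b + lvl p k := by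
  simp [lvl]

lemma lvl_of_length_le (p : List Bool) (k : ℕ) (h : p.length ≤ k) :
    lvl p k = lvl p p.length := by
  unfold lvl
  rw [List.take_of_length_le h, List.take_length]

lemma lvl_append_left (A B : List Bool) (k : ℕ) (h : k ≤ A.length) :
    lvl (A ++ B) k = lvl A k := by
  unfold lvl
  rw [List.take_append_of_le_length h]

lemma lvl_add_drop (p : List Bool) (s m : ℕ) :
    lvl p (s + m) = lvl p s + lvl (p.drop s) m := by
  unfold lvl
  rw [List.take_add, List.map_append, List.sum_append]

lemma lvl_append_right (A B : List Bool) (m : ℕ) :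
    lvl (A ++ B) (A.length + m) = lvl A A.length + lvl B m := by
  rw [lvl_add_drop]
  congr 1
  · exact lvl_append_left A B A.length le_rfl
  · rw [List.drop_left]

lemma lvl_succ (p : List Bool) (k : ℕ) (h : k < p.length) :
    lvl p (k+1) = lvl p k + stepVal p[k] := by
  unfold lvl
  rw [List.take_succ, List.getElem?_eq_getElem h, List.map_append, List.sum_append]
  simp

/-! ### Height lemmas -/

lemma foldr_max_le {l : List ℤ} {b j : ℤ} :
    l.foldr max b ≤ j ↔ b ≤ j ∧ ∀ a ∈ l, a ≤ j := by
  induction l with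
  | nil => simp
  | cons a l ih => simp [max_le_iff, ih]; tauto

lemma le_foldr_max {l : List ℤ} {b a : ℤ} (h : a ∈ l) : a ≤ l.foldr max b := by
  induction l with
  | nil => simp at h
  | cons c l ih =>
    rcases List.mem_cons.1 h with rfl | h
    · exact le_max_left _ _
    · exact le_trans (ih h) (le_max_right _ _)

lemma base_le_foldr_max (l : List ℤ) (b : ℤ) : b ≤ l.foldr max b := by
  induction l with
  | nil => simp
  | cons c l ih => exact le_trans ih (le_max_right _ _)

lemma hgt_le_iff {p : List Bool} {j : ℤ} :
    hgt p ≤ j ↔ 0 ≤ j ∧ ∀ k ≤ p.length, lvl p k ≤ j := by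
  unfold hgt
  rw [foldr_max_le]
  constructor
  · rintro ⟨h0, h⟩
    exact ⟨h0, fun k hk => h _ (List.mem_map_of_mem (List.mem_range.2 (Nat.lt_succ_of_le hk)))⟩
  · rintro ⟨h0, h⟩
    refine ⟨h0, fun a ha => ?_⟩
    rcases List.mem_map.1 ha with ⟨k, hk, rfl⟩
    exact h k (Nat.lt_succ_iff.1 (List.mem_range.1 hk))

lemma lvl_le_hgt (p : List Bool) (k : ℕ) (h : k ≤ p.length) : lvl p k ≤ hgt p :=
  le_foldr_max (List.mem_map_of_mem (List.mem_range.2 (Nat.lt_succ_of_le h)))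

lemma hgt_nonneg (p : List Bool) : 0 ≤ hgt p := base_le_foldr_max _ _

lemma hgt_nil : hgt ([] : List Bool) = 0 := by
  show List.foldr max 0 (List.map (lvl []) (List.range 1)) = 0
  rw [List.range_succ]
  simp [lvl]

/-! ### Parity and height bounds -/

lemma sum_stepVal_parity (l : List Bool) : ((l.map stepVal).sum) % 2 = (l.length : ℤ) % 2 := by
  induction l with
  | nil => simp
  | cons b l ih =>
    have hb : stepVal b = 1 ∨ stepVal b = -1 := by
      cases b <;> simp [stepVal]
    simp only [List.map_cons, List.sum_cons, List.length_cons]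
    rcases hb with hb | hb <;> rw [hb] <;> push_cast <;> omega

lemma length_even_of_isDyck {p : List Bool} (h : IsDyck p) : p.length % 2 = 0 := by
  have h1 : lvl p p.length = 0 := h.1
  have h2 := sum_stepVal_parity p
  unfold lvl at h1
  rw [List.take_length] at h1
  rw [h1] at h2
  omega

lemma lvl_le_k (p : List Bool) (k : ℕ) : lvl p k ≤ (k : ℤ) := by
  have h := List.sum_le_card_nsmul ((p.take k).map stepVal) 1 (by
    intro x hx
    rcases List.mem_map.1 hx with ⟨b, _, rfl⟩
    cases b <;> simp [stepVal])
  rw [nsmul_eq_mul, mul_one] at h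
  have hl : ((((p.take k).map stepVal)).length : ℤ) ≤ (k : ℤ) := by
    simp only [List.length_map]
    exact_mod_cast List.length_take_le k p
  have he : lvl p k = ((p.take k).map stepVal).sum := rfl
  omega

lemma lvl_ge_neg (p : List Bool) (k : ℕ) : -(k : ℤ) ≤ lvl p k := by
  have h := List.card_nsmul_le_sum ((p.take k).map stepVal) (-1) (by
    intro x hx
    rcases List.mem_map.1 hx with ⟨b, _, rfl⟩
    cases b <;> simp [stepVal])
  rw [nsmul_eq_mul, mul_neg_one] at h
  have hl : ((((p.take k).map stepVal)).length : ℤ) ≤ (k : ℤ) := by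
    simp only [List.length_map]
    exact_mod_cast List.length_take_le k p
  have he : lvl p k = ((p.take k).map stepVal).sum := rfl
  omega

lemma two_lvl_le {p : List Bool} (hd : IsDyck p) (k : ℕ) (hk : k ≤ p.length) :
    2 * lvl p k ≤ (p.length : ℤ) := by
  have h1 : lvl p k ≤ (k : ℤ) := lvl_le_k p k
  have h2 : lvl p p.length = lvl p k + lvl (p.drop k) (p.length - k) := by
    rw [← lvl_add_drop]
    congr 1
    omega
  have h3 : -((p.length - k : ℕ) : ℤ) ≤ lvl (p.drop k) (p.length - k) := lvl_ge_neg _ _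
  have h4 : ((p.length - k : ℕ) : ℤ) = (p.length : ℤ) - k := by
    omega
  have h0 : lvl p p.length = 0 := hd.1
  omega

lemma hgt_le_of_length_le {p : List Bool} (hd : IsDyck p) {m : ℕ} (h : p.length ≤ 2 * m) :
    hgt p ≤ (m : ℤ) := by
  rw [hgt_le_iff]
  refine ⟨by positivity, fun k hk => ?_⟩
  have := two_lvl_le hd k hk
  omega


/-! ### Finsets of Dyck paths -/

def allLists (L : ℕ) : Finset (List Bool) :=
  (Finset.univ : Finset (Fin L → Bool)).image List.ofFn

lemma mem_allLists {L : ℕ} {l : List Bool} : l ∈ allLists L ↔ l.length = L := by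
  constructor
  · intro h
    rcases Finset.mem_image.1 h with ⟨f, _, rfl⟩
    simp
  · rintro rfl
    refine Finset.mem_image.2 ⟨fun i => l[(i : ℕ)], Finset.mem_univ _, ?_⟩
    exact List.ofFn_getElem

open Classical in
noncomputable def Dck (j L : ℕ) : Finset (List Bool) :=
  (allLists L).filter (fun p => IsDyck p ∧ hgt p ≤ (j : ℤ))

open Classical in
noncomputable def Ejs (j L : ℕ) : Finset (List Bool) :=
  (allLists L).filter (fun p => IsDyck p ∧ hgt p = (j : ℤ))

open Classical in
noncomputable def Dl (L : ℕ) : Finset (List Bool) :=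
  (allLists L).filter (fun p => IsDyck p)

noncomputable def cnt (j L : ℕ) : ℕ := (Dck j L).card
noncomputable def ejc (j L : ℕ) : ℕ := (Ejs j L).card
noncomputable def dl (L : ℕ) : ℕ := (Dl L).card

lemma mem_Dck {j L : ℕ} {p : List Bool} :
    p ∈ Dck j L ↔ p.length = L ∧ IsDyck p ∧ hgt p ≤ (j : ℤ) := by
  classical
  simp [Dck, mem_allLists, Finset.mem_filter]

lemma mem_Ejs {j L : ℕ} {p : List Bool} :
    p ∈ Ejs j L ↔ p.length = L ∧ IsDyck p ∧ hgt p = (j : ℤ) := by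
  classical
  simp [Ejs, mem_allLists, Finset.mem_filter]

lemma mem_Dl {L : ℕ} {p : List Bool} :
    p ∈ Dl L ↔ p.length = L ∧ IsDyck p := by
  classical
  simp [Dl, mem_allLists, Finset.mem_filter]

lemma isDyck_nil : IsDyck ([] : List Bool) := by
  constructor
  · simp [lvl]
  · intro k hk
    simp at hk
    simp [hk, lvl]

/-- A nonempty Dyck path starts with an up-step and has height at least 1. -/
lemma one_le_hgt {p : List Bool} (hd : IsDyck p) (hne : p ≠ []) : 1 ≤ hgt p := by
  have hlen : 0 < p.length := List.length_pos_iff.2 hne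
  have h1 : 0 ≤ lvl p 1 := hd.2 1 hlen
  have h2 : lvl p 1 = stepVal p[0] := by
    have := lvl_succ p 0 hlen
    simpa [lvl_zero] using this
  have h3 : lvl p 1 = 1 := by
    cases hb : p[0] <;> rw [hb] at h2 <;> simp [stepVal] at h2 <;> omega
  calc (1 : ℤ) = lvl p 1 := h3.symm
    _ ≤ hgt p := lvl_le_hgt p 1 hlen

lemma cnt_zero_length {L : ℕ} (hL : L ≠ 0) : cnt 0 L = 0 := by
  rw [cnt, Finset.card_eq_zero]
  rw [Finset.eq_empty_iff_forall_notMem]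
  intro p hp
  rw [mem_Dck] at hp
  obtain ⟨hlen, hd, hh⟩ := hp
  have hne : p ≠ [] := by
    intro h
    rw [h] at hlen
    simp at hlen
    omega
  have := one_le_hgt hd hne
  omega

lemma cnt_nil (j : ℕ) : cnt j 0 = 1 := by
  rw [cnt]
  have : Dck j 0 = {[]} := by
    ext p
    rw [mem_Dck]
    simp [List.length_eq_zero_iff]
    rintro rfl
    refine ⟨isDyck_nil, ?_⟩
    rw [hgt_nil]
    positivity
  rw [this]
  simp

lemma dl_nil : dl 0 = 1 := by
  rw [dl]
  have : Dl 0 = {[]} := by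
    ext p
    rw [mem_Dl]
    simp [List.length_eq_zero_iff]
    rintro rfl
    exact isDyck_nil
  rw [this]
  simp

lemma cnt_odd {j L : ℕ} (hL : L % 2 = 1) : cnt j L = 0 := by
  rw [cnt, Finset.card_eq_zero, Finset.eq_empty_iff_forall_notMem]
  intro p hp
  rw [mem_Dck] at hp
  have := length_even_of_isDyck hp.2.1
  omega

lemma dl_odd {L : ℕ} (hL : L % 2 = 1) : dl L = 0 := by
  rw [dl, Finset.card_eq_zero, Finset.eq_empty_iff_forall_notMem]
  intro p hp
  rw [mem_Dl] at hp
  have := length_even_of_isDyck hp.2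
  omega

lemma cnt_eq_dl {j L : ℕ} (h : L ≤ 2 * j) : cnt j L = dl L := by
  rw [cnt, dl]
  congr 1
  ext p
  rw [mem_Dck, mem_Dl]
  constructor
  · tauto
  · rintro ⟨hlen, hd⟩
    refine ⟨hlen, hd, hgt_le_of_length_le hd ?_⟩
    omega


/-! ### First-return decomposition -/

lemma lvl_join_low (A B : List Bool) (k : ℕ) (hk : k ≤ A.length) :
    lvl (true :: A ++ false :: B) (k + 1) = 1 + lvl A k := by
  rw [show (true :: A ++ false :: B) = true :: (A ++ false :: B) from rfl, lvl_cons,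
    lvl_append_left A _ k hk]
  simp [stepVal]

lemma lvl_join_high (A B : List Bool) (m : ℕ) :
    lvl (true :: A ++ false :: B) (A.length + 2 + m) = lvl A A.length + lvl B m := by
  have h1 : A.length + 2 + m = (A.length + (1 + m)) + 1 := by omega
  rw [h1, show (true :: A ++ false :: B) = true :: (A ++ false :: B) from rfl, lvl_cons,
    lvl_append_right A (false :: B) (1 + m)]
  rw [show (1 + m) = m + 1 from by omega]
  rw [lvl_cons]
  simp [stepVal]
  ring

lemma join_length (A B : List Bool) :
    (true :: A ++ false :: B).length = A.length + B.length + 2 := by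
  simp
  omega

lemma join_mem {j a b : ℕ} {A B : List Bool} (hA : A ∈ Dck j a) (hB : B ∈ Dck (j+1) b) :
    (true :: A ++ false :: B) ∈ Dck (j+1) (a + b + 2) := by
  rw [mem_Dck] at hA hB ⊢
  obtain ⟨hAl, hAd, hAh⟩ := hA
  obtain ⟨hBl, hBd, hBh⟩ := hB
  have hlen : (true :: A ++ false :: B).length = A.length + B.length + 2 := join_length A B
  have hAB : ∀ k ≤ A.length + B.length + 2,
      (0 ≤ lvl (true :: A ++ false :: B) k ∧ lvl (true :: A ++ false :: B) k ≤ (j:ℤ) + 1) := by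
    intro k hk
    rcases Nat.eq_zero_or_pos k with rfl | hk0
    · rw [lvl_zero]
      constructor <;> positivity
    · rcases le_or_gt k (A.length + 1) with hca | hca
      · obtain ⟨k', rfl⟩ : ∃ k', k = k' + 1 := ⟨k - 1, by omega⟩
        rw [lvl_join_low A B k' (by omega)]
        have h1 : 0 ≤ lvl A k' := hAd.2 k' (by omega)
        have h2 : lvl A k' ≤ hgt A := lvl_le_hgt A k' (by omega)
        constructor <;> omega
      · obtain ⟨m, rfl⟩ : ∃ m, k = A.length + 2 + m := ⟨k - (A.length + 2), by omega⟩
        rw [lvl_join_high A B m]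
        rw [hAd.1]
        have h1 : 0 ≤ lvl B m := hBd.2 m (by omega)
        have h2 : lvl B m ≤ hgt B := lvl_le_hgt B m (by omega)
        constructor <;> omega
  refine ⟨by rw [hlen, hAl, hBl], ⟨?_, ?_⟩, ?_⟩
  · rw [hlen, show A.length + B.length + 2 = A.length + 2 + B.length from by omega,
      lvl_join_high A B B.length, hAd.1, hBd.1]
    ring
  · intro k hk
    rw [hlen] at hk
    exact (hAB k hk).1
  · rw [hgt_le_iff]
    refine ⟨by positivity, fun k hk => ?_⟩
    rw [hlen] at hk
    exact (hAB k hk).2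

open Classical in
/-- The first-return time of a path. -/
noncomputable def fr (p : List Bool) : ℕ :=
  if h : ∃ k, 0 < k ∧ lvl p k = 0 ∧ k ≤ p.length then Nat.find h else 0

lemma fr_spec {p : List Bool} (hd : IsDyck p) (hne : p ≠ []) :
    (0 < fr p ∧ lvl p (fr p) = 0 ∧ fr p ≤ p.length) ∧
      ∀ m, 0 < m → m < fr p → lvl p m ≠ 0 := by
  have hex : ∃ k, 0 < k ∧ lvl p k = 0 ∧ k ≤ p.length :=
    ⟨p.length, List.length_pos_iff.2 hne, hd.1, le_rfl⟩
  rw [fr, dif_pos hex]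
  refine ⟨Nat.find_spec hex, fun m hm0 hmlt h => ?_⟩
  have := Nat.find_min hex hmlt
  have hmle : m ≤ p.length := le_trans (le_of_lt hmlt) (Nat.find_spec hex).2.2
  exact this ⟨hm0, h, hmle⟩

lemma fr_facts {p : List Bool} (hd : IsDyck p) (hne : p ≠ []) :
    2 ≤ fr p ∧ lvl p (fr p) = 0 ∧ fr p ≤ p.length ∧
      (∀ m, 0 < m → m < fr p → 1 ≤ lvl p m) ∧
      lvl p (fr p - 1) = 1 ∧ p[0]'(List.length_pos_iff.2 hne) = true ∧
      p[fr p - 1]'(by have := (fr_spec hd hne).1; omega) = false := by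
  obtain ⟨⟨h0, hlvl, hle⟩, hmin⟩ := fr_spec hd hne
  have hpos : ∀ m, 0 < m → m < fr p → 1 ≤ lvl p m := by
    intro m hm0 hmlt
    have h1 := hd.2 m (le_trans (le_of_lt hmlt) hle)
    have h2 := hmin m hm0 hmlt
    omega
  have hlen0 : 0 < p.length := List.length_pos_iff.2 hne
  have hstep0 : lvl p 1 = stepVal (p[0]'hlen0) := by
    have := lvl_succ p 0 hlen0
    simpa [lvl_zero] using this
  have hpm : ∀ (h : 0 < p.length), stepVal (p[0]'hlen0) = 1 ∨ stepVal (p[0]'hlen0) = -1 := by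
    intro h
    cases hb : p[0]'hlen0 <;> simp [stepVal]
  have hr2 : 2 ≤ fr p := by
    rcases Nat.lt_or_ge (fr p) 2 with h | h
    · exfalso
      have h1 : fr p = 1 := by omega
      rw [h1] at hlvl
      rcases hpm hlen0 with hh | hh <;> rw [hstep0, hh] at hlvl <;> simp at hlvl
    · exact h
  have hlast : lvl p (fr p) = lvl p (fr p - 1) + stepVal (p[fr p - 1]'(by omega)) := by
    have := lvl_succ p (fr p - 1) (by omega)
    rw [show fr p - 1 + 1 = fr p from by omega] at this
    exact this
  have hprev : 1 ≤ lvl p (fr p - 1) := hpos _ (by omega) (by omega)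
  have hpm2 : stepVal (p[fr p - 1]'(by omega)) = 1 ∨ stepVal (p[fr p - 1]'(by omega)) = -1 := by
    cases hb : p[fr p - 1]'(by omega) <;> simp [stepVal]
  have hprev1 : lvl p (fr p - 1) = 1 := by
    rcases hpm2 with hh | hh <;> omega
  have hlaststep : stepVal (p[fr p - 1]'(by omega)) = -1 := by omega
  have hfirst : p[0]'hlen0 = true := by
    have h1 : lvl p 1 = 1 := by
      rcases Nat.eq_or_lt_of_le hr2 with h | h
      · rw [← h] at hprev1
        simpa using hprev1
      · have := hpos 1 (by omega) (by omega)
        have h2 := lvl_le_k p 1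
        omega
    cases hb : p[0]'hlen0
    · rw [hstep0, hb] at h1
      simp [stepVal] at h1
    · rfl
  have hlastb : p[fr p - 1]'(by omega) = false := by
    cases hb : p[fr p - 1]'(by omega)
    · rfl
    · rw [hb] at hlaststep
      simp [stepVal] at hlaststep
  exact ⟨hr2, hlvl, hle, hpos, hprev1, hfirst, hlastb⟩

lemma lvl_take (l : List Bool) (s m : ℕ) (h : m ≤ s) :
    lvl (l.take s) m = lvl l m := by
  unfold lvl
  rw [List.take_take, min_eq_left h]

lemma split_spec {j L : ℕ} {p : List Bool} (hp : p ∈ Dck (j+1) (L+2)) :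
    2 ≤ fr p ∧ fr p - 2 ≤ L ∧
    ((p.drop 1).take (fr p - 2)) ∈ Dck j (fr p - 2) ∧
    (p.drop (fr p)) ∈ Dck (j+1) (L - (fr p - 2)) ∧
    p = true :: ((p.drop 1).take (fr p - 2)) ++ false :: (p.drop (fr p)) := by
  rw [mem_Dck] at hp
  obtain ⟨hlen, hd, hh⟩ := hp
  have hne : p ≠ [] := by
    intro h
    rw [h] at hlen
    simp at hlen
  obtain ⟨hr2, hlvl, hle, hpos, hprev1, hfirst, hlastb⟩ := fr_facts hd hne
  set r := fr p with hr
  set A := (p.drop 1).take (r - 2) with hA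
  set B := p.drop r with hB
  have hlen' : p.length = L + 2 := hlen
  have hq : p = true :: p.drop 1 := by
    conv_lhs => rw [← List.drop_zero (l := p), ← List.getElem_cons_drop (as := p) (i := 0) (by omega)]
    rw [hfirst]
  have hAlen : A.length = r - 2 := by
    rw [hA, List.length_take]
    simp
    omega
  have hBlen : B.length = L + 2 - r := by
    rw [hB, List.length_drop]
    omega
  -- level identities
  have hlq : ∀ m, lvl p (m + 1) = 1 + lvl (p.drop 1) m := by
    intro m
    conv_lhs => rw [hq]
    rw [lvl_cons]
    simp [stepVal]
  have hlA : ∀ m, m ≤ r - 2 → lvl A m = lvl p (m + 1) - 1 := by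
    intro m hm
    rw [hA, lvl_take _ _ _ hm]
    rw [hlq m]
    ring
  have hlB : ∀ m, lvl B m = lvl p (r + m) := by
    intro m
    have := lvl_add_drop p r m
    rw [hB]
    omega
  -- decomposition
  have hdecomp : p = true :: A ++ false :: B := by
    have h1 : p.drop 1 = A ++ (p.drop 1).drop (r - 2) := (List.take_append_drop _ _).symm
    have h2 : (p.drop 1).drop (r - 2) = p.drop (r - 1) := by
      rw [List.drop_drop]
      congr 1
      omega
    have h3 : p.drop (r - 1) = false :: B := by
      have := List.getElem_cons_drop (as := p) (i := r - 1) (by omega)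
      rw [show r - 1 + 1 = r from by omega] at this
      rw [← this, hlastb]
    conv_lhs => rw [hq]
    rw [h1, h2, h3]
    rfl
  -- A is Dyck with height ≤ j
  have hAmem : A ∈ Dck j (r - 2) := by
    rw [mem_Dck]
    refine ⟨hAlen, ⟨?_, ?_⟩, ?_⟩
    · rw [hAlen, hlA (r-2) le_rfl, show r - 2 + 1 = r - 1 from by omega, hprev1]
      ring
    · intro k hk
      rw [hAlen] at hk
      rw [hlA k hk]
      have := hpos (k+1) (by omega) (by omega)
      omega
    · rw [hgt_le_iff]
      refine ⟨by positivity, fun k hk => ?_⟩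
      rw [hAlen] at hk
      rw [hlA k hk]
      have h1 : lvl p (k+1) ≤ hgt p := lvl_le_hgt p (k+1) (by omega)
      have h2 : hgt p ≤ (j:ℤ) + 1 := by exact_mod_cast hh
      omega
  have hBmem : B ∈ Dck (j+1) (L - (r - 2)) := by
    rw [mem_Dck]
    refine ⟨by omega, ⟨?_, ?_⟩, ?_⟩
    · rw [hBlen, hlB, show r + (L + 2 - r) = p.length from by omega]
      exact hd.1
    · intro k hk
      rw [hBlen] at hk
      rw [hlB]
      exact hd.2 _ (by omega)
    · rw [hgt_le_iff]
      refine ⟨by positivity, fun k hk => ?_⟩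
      rw [hBlen] at hk
      rw [hlB]
      have h1 : lvl p (r+k) ≤ hgt p := lvl_le_hgt p (r+k) (by omega)
      have h2 : hgt p ≤ (j:ℤ) + 1 := by exact_mod_cast hh
      omega
  exact ⟨hr2, by omega, hAmem, by convert hBmem using 2, hdecomp⟩

lemma fr_join {A B : List Bool} (hA : IsDyck A) (hB : IsDyck B) :
    fr (true :: A ++ false :: B) = A.length + 2 := by
  set J := true :: A ++ false :: B with hJ
  have hJd : ∀ k, 0 < k → k < A.length + 2 → lvl J k ≠ 0 := by
    intro k hk0 hk
    obtain ⟨k', rfl⟩ : ∃ k', k = k' + 1 := ⟨k - 1, by omega⟩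
    rw [hJ, lvl_join_low A B k' (by omega)]
    have := hA.2 k' (by omega)
    omega
  have hJ0 : lvl J (A.length + 2) = 0 := by
    rw [hJ, show A.length + 2 = A.length + 2 + 0 from by omega, lvl_join_high, hA.1, lvl_zero]
    ring
  have hJlen : A.length + 2 ≤ J.length := by
    rw [hJ, join_length]
    omega
  have hex : ∃ k, 0 < k ∧ lvl J k = 0 ∧ k ≤ J.length := ⟨A.length + 2, by omega, hJ0, hJlen⟩
  rw [fr, dif_pos hex]
  rw [Nat.find_eq_iff]
  refine ⟨⟨by omega, hJ0, hJlen⟩, fun m hm => ?_⟩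
  rintro ⟨hm0, hml, _⟩
  exact hJd m hm0 hm hml

/-- The key recurrence for bounded-height Dyck path counts. -/
lemma cnt_rec (j L : ℕ) :
    cnt (j+1) (L+2) = ∑ ℓ ∈ range (L+1), cnt j ℓ * cnt (j+1) (L - ℓ) := by
  classical
  have hcard : ((range (L+1)).sigma (fun ℓ => Dck j ℓ ×ˢ Dck (j+1) (L - ℓ))).card
      = ∑ ℓ ∈ range (L+1), cnt j ℓ * cnt (j+1) (L - ℓ) := by
    rw [Finset.card_sigma]
    refine Finset.sum_congr rfl fun ℓ _ => ?_
    rw [Finset.card_product]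
    rfl
  rw [← hcard, cnt]
  apply Finset.card_bij'
    (i := fun p _ => (⟨fr p - 2, ((p.drop 1).take (fr p - 2), p.drop (fr p))⟩ :
      Σ _ : ℕ, List Bool × List Bool))
    (j := fun x _ => true :: x.2.1 ++ false :: x.2.2)
  · intro p hp
    obtain ⟨hr2, hrL, hAmem, hBmem, _⟩ := split_spec hp
    refine Finset.mem_sigma.2 ⟨Finset.mem_range.2 (show fr p - 2 < L + 1 by omega),
      Finset.mem_product.2 ⟨hAmem, hBmem⟩⟩
  · intro x hx
    rw [Finset.mem_sigma, Finset.mem_product] at hx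
    obtain ⟨hℓ, hA, hB⟩ := hx
    have := join_mem hA hB
    have hAl : x.2.1.length = x.1 := (mem_Dck.1 hA).1
    have hx1 : x.1 + (L - x.1) + 2 = L + 2 := by
      have := Finset.mem_range.1 hℓ
      omega
    rw [hx1] at this
    exact this
  · intro p hp
    obtain ⟨_, _, _, _, hdec⟩ := split_spec hp
    exact hdec.symm
  · intro x hx
    rw [Finset.mem_sigma, Finset.mem_product] at hx
    obtain ⟨hℓ, hA, hB⟩ := hx
    rw [mem_Dck] at hA hB
    have hfr : fr (true :: x.2.1 ++ false :: x.2.2) = x.2.1.length + 2 :=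
      fr_join hA.2.1 hB.2.1
    obtain ⟨ℓ, A, B⟩ := x
    simp only at hfr ⊢
    have hAl : A.length = ℓ := hA.1
    have h1 : fr (true :: A ++ false :: B) - 2 = ℓ := by omega
    have h2 : (true :: A ++ false :: B).drop 1 = A ++ false :: B := rfl
    have h3 : (A ++ false :: B).take ℓ = A := by
      rw [← hAl]
      exact List.take_left
    have h4 : (true :: A ++ false :: B).drop (fr (true :: A ++ false :: B)) = B := by
      rw [hfr]
      rw [show (true :: A ++ false :: B) = (true :: A) ++ (false :: B) from rfl]
      rw [show A.length + 2 = (true :: A).length + 1 from by simp]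
      rw [List.drop_append]
      simp
    rw [h1]
    congr 1
    rw [h2, h3, h4]


/-! ### Catalan identification -/

lemma dl_rec (L : ℕ) : dl (L+2) = ∑ ℓ ∈ range (L+1), dl ℓ * dl (L - ℓ) := by
  have h := cnt_rec (L+1) L
  rw [cnt_eq_dl (by omega)] at h
  rw [h]
  apply Finset.sum_congr rfl
  intro ℓ hℓ
  have hℓ' := Finset.mem_range.1 hℓ
  rw [cnt_eq_dl (show ℓ ≤ 2*(L+1) from by omega), cnt_eq_dl (show L - ℓ ≤ 2*(L+1+1) from by omega)]

lemma sum_range_even (n : ℕ) (f : ℕ → ℕ) (hf : ∀ ℓ, ℓ % 2 = 1 → f ℓ = 0) :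
    ∑ ℓ ∈ range (2*n+1), f ℓ = ∑ a ∈ range (n+1), f (2*a) := by
  classical
  rw [← Finset.sum_filter_add_sum_filter_not (range (2*n+1)) (fun ℓ => ℓ % 2 = 0)]
  have h1 : ∑ ℓ ∈ (range (2*n+1)).filter (fun ℓ => ¬ ℓ % 2 = 0), f ℓ = 0 := by
    apply Finset.sum_eq_zero
    intro ℓ hℓ
    rw [Finset.mem_filter] at hℓ
    exact hf ℓ (by omega)
  have h2 : (range (2*n+1)).filter (fun ℓ => ℓ % 2 = 0) = (range (n+1)).image (fun a => 2*a) := by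
    ext m
    simp only [Finset.mem_filter, Finset.mem_range, Finset.mem_image]
    constructor
    · rintro ⟨h, h'⟩
      exact ⟨m / 2, by omega, by omega⟩
    · rintro ⟨a, ha, rfl⟩
      omega
  rw [h1, h2, Finset.sum_image (fun a _ b _ h => by omega)]
  omega

lemma dl_catalan : ∀ n, dl (2*n) = catalan n := by
  intro n
  induction n using Nat.strong_induction_on with
  | _ n ih =>
    match n with
    | 0 => simpa using dl_nil
    | (m+1) =>
      have h : dl (2*(m+1)) = ∑ ℓ ∈ range (2*m+1), dl ℓ * dl (2*m - ℓ) := by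
        rw [show 2*(m+1) = 2*m+2 from by omega]
        exact dl_rec (2*m)
      rw [h, sum_range_even m _ (fun ℓ hℓ => by rw [dl_odd hℓ]; ring)]
      rw [catalan_succ]
      rw [← Finset.sum_range fun i => catalan i * catalan (m - i)]
      apply Finset.sum_congr rfl
      intro a ha
      have ha' := Finset.mem_range.1 ha
      rw [show 2*m - 2*a = 2*(m-a) from by omega, ih a (by omega), ih (m-a) (by omega)]

/-! ### Exact-height counts -/

lemma cnt_succ_eq (j L : ℕ) : cnt (j+1) L = cnt j L + ejc (j+1) L := by
  classical
  rw [cnt, cnt, ejc]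
  rw [← Finset.card_union_of_disjoint]
  · congr 1
    ext p
    rw [Finset.mem_union, mem_Dck, mem_Dck, mem_Ejs]
    push_cast
    constructor
    · rintro ⟨h1, h2, h3⟩
      rcases eq_or_lt_of_le h3 with h | h
      · exact Or.inr ⟨h1, h2, h⟩
      · exact Or.inl ⟨h1, h2, by omega⟩
    · rintro (⟨h1, h2, h3⟩ | ⟨h1, h2, h3⟩)
      · exact ⟨h1, h2, by omega⟩
      · exact ⟨h1, h2, by omega⟩
  · rw [Finset.disjoint_left]
    intro p hp hp'
    rw [mem_Dck] at hp
    rw [mem_Ejs] at hp'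
    have h1 := hp.2.2
    have h2 := hp'.2.2
    push_cast at h1 h2
    omega

lemma ejc_zero_eq (L : ℕ) : ejc 0 L = cnt 0 L := by
  classical
  rw [ejc, cnt]
  congr 1
  ext p
  rw [mem_Ejs, mem_Dck]
  have := hgt_nonneg p
  constructor
  · rintro ⟨h1, h2, h3⟩
    exact ⟨h1, h2, by omega⟩
  · rintro ⟨h1, h2, h3⟩
    exact ⟨h1, h2, by omega⟩

/-! ### Power series -/

open PowerSeries

noncomputable def Gs (j : ℕ) : PowerSeries ℚ := PowerSeries.mk fun L => (cnt j L : ℚ)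

noncomputable def Cs : PowerSeries ℚ := PowerSeries.mk fun L => (dl L : ℚ)

noncomputable def Es : ℕ → PowerSeries ℚ
  | 0 => 1
  | (j+1) => Gs (j+1) - Gs j

lemma coeff_Es (j L : ℕ) : (PowerSeries.coeff L) (Es j) = (ejc j L : ℚ) := by
  match j with
  | 0 =>
    rw [Es, PowerSeries.coeff_one, ejc_zero_eq]
    rcases Nat.eq_zero_or_pos L with rfl | hL
    · rw [if_pos rfl, cnt_nil]
      norm_num
    · rw [if_neg (by omega), cnt_zero_length (by omega)]
      norm_num
  | (j+1) =>
    rw [Es, map_sub, Gs, Gs, PowerSeries.coeff_mk, PowerSeries.coeff_mk]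
    have := cnt_succ_eq j L
    have h : (cnt (j+1) L : ℚ) = (cnt j L : ℚ) + (ejc (j+1) L : ℚ) := by exact_mod_cast this
    linarith

lemma coeff_prod_cnt (j j' L : ℕ) :
    (PowerSeries.coeff L) (Gs j * Gs j') =
      ∑ ℓ ∈ range (L+1), (cnt j ℓ : ℚ) * (cnt j' (L - ℓ) : ℚ) := by
  rw [PowerSeries.coeff_mul, Finset.Nat.sum_antidiagonal_eq_sum_range_succ_mk]
  simp [Gs, PowerSeries.coeff_mk]

lemma Gs_zero : Gs 0 = 1 := by
  ext L
  rw [Gs, PowerSeries.coeff_mk, PowerSeries.coeff_one]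
  rcases Nat.eq_zero_or_pos L with rfl | hL
  · rw [if_pos rfl, cnt_nil]
    norm_num
  · rw [if_neg (by omega), cnt_zero_length (by omega)]
    norm_num

lemma Gs_rec (j : ℕ) : Gs (j+1) = 1 + PowerSeries.X^2 * (Gs j * Gs (j+1)) := by
  ext L
  rw [map_add, PowerSeries.coeff_one, PowerSeries.coeff_X_pow_mul']
  match L with
  | 0 => simp [Gs, PowerSeries.coeff_mk, cnt_nil]
  | 1 =>
    rw [Gs, PowerSeries.coeff_mk, cnt_odd (by omega)]
    norm_num
  | (L+2) =>
    have h0 : ¬ (L + 2 = 0) := by omega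
    have h2 : 2 ≤ L + 2 := by omega
    rw [if_neg h0, if_pos h2, show L + 2 - 2 = L from by omega, coeff_prod_cnt, Gs,
      PowerSeries.coeff_mk]
    rw [cnt_rec j L]
    push_cast
    ring

lemma Cs_rec : Cs = 1 + PowerSeries.X^2 * (Cs * Cs) := by
  ext L
  rw [map_add, PowerSeries.coeff_one, PowerSeries.coeff_X_pow_mul']
  match L with
  | 0 => simp [Cs, PowerSeries.coeff_mk, dl_nil]
  | 1 =>
    rw [Cs, PowerSeries.coeff_mk, dl_odd (by omega)]
    norm_num
  | (L+2) =>
    have h0 : ¬ (L + 2 = 0) := by omega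
    have h2 : 2 ≤ L + 2 := by omega
    rw [if_neg h0, if_pos h2, Cs, PowerSeries.coeff_mk,
      show L + 2 - 2 = L from by omega]
    rw [PowerSeries.coeff_mul, Finset.Nat.sum_antidiagonal_eq_sum_range_succ_mk]
    simp only [Cs, PowerSeries.coeff_mk]
    rw [dl_rec L]
    push_cast
    ring


/-! ### Fibonacci-type denominators and telescoping -/

noncomputable def qs : ℕ → PowerSeries ℚ
  | 0 => 1
  | 1 => 1
  | (j+2) => qs (j+1) - PowerSeries.X^2 * qs j

lemma qs_rec (j : ℕ) : qs (j+2) = qs (j+1) - PowerSeries.X^2 * qs j := rfl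

lemma cassini : ∀ j, qs (j+1)^2 - qs (j+2) * qs j = (PowerSeries.X^2)^(j+1) := by
  intro j
  induction j with
  | zero =>
    show qs 1^2 - qs 2 * qs 0 = _
    rw [qs_rec 0]
    show (1:PowerSeries ℚ)^2 - (1 - PowerSeries.X^2 * 1) * 1 = _
    ring
  | succ j ih =>
    have hq2 := qs_rec j
    have hq3 := qs_rec (j+1)
    linear_combination (PowerSeries.X^2) * ih + qs (j+2) * hq2 - qs (j+1) * hq3

lemma Gq : ∀ j, Gs j * qs (j+1) = qs j := by
  intro j
  induction j with
  | zero =>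
    show Gs 0 * qs 1 = qs 0
    rw [Gs_zero]
    show (1:PowerSeries ℚ) * 1 = 1
    ring
  | succ j ih =>
    have hq2 := qs_rec j
    have hGr := Gs_rec j
    linear_combination (Gs (j+1)) * hq2 + PowerSeries.X^2 * Gs (j+1) * ih + qs (j+1) * hGr

lemma Eq_q : ∀ j, Es j * qs j * qs (j+1) = (PowerSeries.X^2)^j := by
  intro j
  match j with
  | 0 =>
    show Es 0 * qs 0 * qs 1 = _
    rw [show Es 0 = 1 from rfl]
    show (1:PowerSeries ℚ) * 1 * 1 = _
    ring
  | (j+1) =>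
    rw [show Es (j+1) = Gs (j+1) - Gs j from rfl]
    linear_combination qs (j+1) * (Gq (j+1)) - qs (j+2) * (Gq j) + cassini j

noncomputable def Ys : PowerSeries ℚ := Cs - 1

lemma hY : PowerSeries.X^2 * (1 + Ys)^2 = Ys := by
  rw [Ys]
  linear_combination -Cs_rec

lemma Dq : ∀ j, ((1 - Ys) * (1 + Ys)^j * qs j = 1 - Ys^(j+1)) ∧
    ((1 - Ys) * (1 + Ys)^(j+1) * qs (j+1) = 1 - Ys^(j+2)) := by
  intro j
  induction j with
  | zero =>
    constructor
    · show (1 - Ys) * (1 + Ys)^0 * qs 0 = _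
      show (1 - Ys) * (1 + Ys)^0 * 1 = _
      ring
    · show (1 - Ys) * (1 + Ys)^1 * qs 1 = _
      show (1 - Ys) * (1 + Ys)^1 * 1 = _
      ring
  | succ j ih =>
    refine ⟨ih.2, ?_⟩
    have hq2 := qs_rec j
    linear_combination ((1-Ys)*(1+Ys)^(j+2)) * hq2 + (1+Ys) * ih.2
      - ((1-Ys)*(1+Ys)^j*qs j) * hY - Ys * ih.1

lemma XYpow : ∀ j, (PowerSeries.X^2)^j * (1+Ys)^(2*j) = Ys^j := by
  intro j
  induction j with
  | zero => simp
  | succ j ih =>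
    linear_combination (PowerSeries.X^2*(1+Ys)^2) * ih + Ys^j * hY

lemma ED (j : ℕ) : Es j * (1 - Ys^(j+1)) * (1 - Ys^(j+2)) = Ys^j * ((1-Ys)^2*(1+Ys)) := by
  linear_combination (-(Es j)*(1 - Ys^(j+2))) * (Dq j).1
    - Es j * ((1-Ys)*(1+Ys)^j*qs j) * (Dq j).2
    + ((1-Ys)^2*(1+Ys)^(2*j+1)) * Eq_q j + ((1-Ys)^2*(1+Ys)) * XYpow j

lemma constY : PowerSeries.constantCoeff Ys = 0 := by
  rw [Ys, map_sub]
  have : PowerSeries.constantCoeff Cs = (dl 0 : ℚ) := by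
    rw [Cs, ← PowerSeries.coeff_zero_eq_constantCoeff_apply, PowerSeries.coeff_mk]
  rw [this, dl_nil, map_one]
  norm_num

lemma isUnit_D (j : ℕ) : IsUnit (1 - Ys^(j+1) : PowerSeries ℚ) := by
  rw [PowerSeries.isUnit_iff_constantCoeff, map_sub, map_one, map_pow, constY,
    zero_pow (by omega : j + 1 ≠ 0)]
  simpa using isUnit_one

noncomputable def vnum (j : ℕ) : PowerSeries ℚ :=
  (1-Ys)^3*(1+Ys) * Ys^(2*j) * (1 + 2*Ys - Ys^(j+2))

noncomputable def vden (j : ℕ) : PowerSeries ℚ := (1 - Ys^(j+1))^2 * (1 - Ys^(j+2))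

noncomputable def vs (j : ℕ) : PowerSeries ℚ := vnum j * Ring.inverse (vden j)

lemma isUnit_vden (j : ℕ) : IsUnit (vden j) := ((isUnit_D j).pow 2).mul (isUnit_D (j+1))

lemma vs_mul (j : ℕ) : vs j * vden j = vnum j := by
  rw [vs, mul_assoc, Ring.inverse_mul_cancel _ (isUnit_vden j), mul_one]

lemma tele (j : ℕ) : Es j^2 + 2 * Es j * Es (j+1) = vs j - vs (j+1) := by
  apply (IsUnit.mul (isUnit_vden j) (isUnit_vden (j+1))).mul_right_cancel
  have expand : (Es j^2 + 2 * Es j * Es (j+1)) * (vden j * vden (j+1)) =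
      (Es j * (1 - Ys^(j+1)) * (1 - Ys^(j+2)))^2 * ((1 - Ys^(j+1+1))*(1 - Ys^(j+1+2)))
      + 2*(Es j * (1 - Ys^(j+1)) * (1 - Ys^(j+2)))
        * (Es (j+1) * (1 - Ys^(j+1+1)) * (1 - Ys^(j+1+2)))
        * ((1 - Ys^(j+1))*(1 - Ys^(j+2))) := by
    rw [vden, vden]
    ring
  rw [expand, ED j, ED (j+1)]
  have expand2 : (vs j - vs (j+1)) * (vden j * vden (j+1)) =
      (vs j * vden j) * vden (j+1) - (vs (j+1) * vden (j+1)) * vden j := by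
    ring
  rw [expand2, vs_mul j, vs_mul (j+1), vnum, vnum, vden, vden]
  ring

lemma sum_tele (J : ℕ) :
    ∑ j ∈ range (J+1), (Es j^2 + 2 * Es j * Es (j+1)) = vs 0 - vs (J+1) := by
  induction J with
  | zero =>
    rw [Finset.sum_range_one]
    exact tele 0
  | succ J ih =>
    rw [Finset.sum_range_succ, ih, tele (J+1)]
    ring

lemma vs_zero : vs 0 = 1 + 2*Ys - Ys^2 := by
  have h : vnum 0 = (1 + 2*Ys - Ys^2) * vden 0 := by
    rw [vnum, vden]
    ring
  rw [vs, h, mul_assoc, Ring.mul_inverse_cancel _ (isUnit_vden 0), mul_one]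

lemma coeff_vs_vanish (J m : ℕ) (hm : m < 4*(J+1)) :
    (PowerSeries.coeff m) (vs (J+1)) = 0 := by
  have hXY : (PowerSeries.X : PowerSeries ℚ)^2 ∣ Ys := ⟨(1+Ys)^2, hY.symm⟩
  have hdvd : (PowerSeries.X : PowerSeries ℚ)^(4*(J+1)) ∣ vs (J+1) := by
    have h1 : Ys^(2*(J+1)) ∣ vs (J+1) := by
      refine Dvd.dvd.mul_right ?_ _
      rw [vnum]
      exact Dvd.dvd.mul_right (Dvd.dvd.mul_left (dvd_refl _) _) _
    have h2 : (PowerSeries.X : PowerSeries ℚ)^(4*(J+1)) ∣ Ys^(2*(J+1)) := by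
      rw [show 4*(J+1) = 2*(2*(J+1)) from by omega, pow_mul]
      exact pow_dvd_pow_of_dvd hXY _
    exact dvd_trans h2 h1
  exact PowerSeries.X_pow_dvd_iff.1 hdvd m hm

lemma coeff_main (n : ℕ) (hn : 0 < n) :
    (PowerSeries.coeff (2*n)) (∑ j ∈ range (n+1), (Es j^2 + 2 * Es j * Es (j+1)))
      = 4*(dl (2*n) : ℚ) - (dl (2*n+2) : ℚ) := by
  rw [sum_tele n, map_sub, coeff_vs_vanish n (2*n) (by omega), vs_zero, sub_zero]
  have hC4 : (PowerSeries.C) 4 = (4 : PowerSeries ℚ) := by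
    exact map_ofNat _ 4
  have hC2 : (PowerSeries.C) 2 = (2 : PowerSeries ℚ) := by
    exact map_ofNat _ 2
  have h : (1 + 2*Ys - Ys^2 : PowerSeries ℚ)
      = PowerSeries.C 4 * Cs - Cs*Cs - PowerSeries.C 2 := by
    rw [hC4, hC2, Ys]
    ring
  rw [h, map_sub, map_sub, PowerSeries.coeff_C_mul]
  have hc : ∀ m, (PowerSeries.coeff m) Cs = (dl m : ℚ) := fun m => by
    rw [Cs, PowerSeries.coeff_mk]
  have hCsq : (PowerSeries.coeff (2*n)) (Cs * Cs) = (dl (2*n+2) : ℚ) := by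
    have h2 := congrArg (PowerSeries.coeff (2*n+2)) Cs_rec
    rw [map_add, PowerSeries.coeff_one, if_neg (by omega : ¬(2*n+2 = 0)),
      PowerSeries.coeff_X_pow_mul (Cs*Cs) 2 (2*n), zero_add, hc (2*n+2)] at h2
    exact h2.symm
  rw [hc (2*n), hCsq, PowerSeries.coeff_C, if_neg (by omega : ¬(2*n = 0))]
  ring


/-! ### The pair partition -/

noncomputable def Upart (n j ℓ : ℕ) : Finset (List Bool × List Bool) :=
  (Ejs j ℓ ×ˢ Ejs j (2*n - ℓ) ∪ Ejs j ℓ ×ˢ Ejs (j+1) (2*n - ℓ))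
    ∪ Ejs (j+1) ℓ ×ˢ Ejs j (2*n - ℓ)

lemma mem_U {n j ℓ : ℕ} {pr : List Bool × List Bool} :
    pr ∈ Upart n j ℓ ↔
    (pr.1.length = ℓ ∧ pr.2.length = 2*n - ℓ ∧ IsDyck pr.1 ∧ IsDyck pr.2 ∧
      ((hgt pr.1 = (j:ℤ) ∧ hgt pr.2 = (j:ℤ)) ∨ (hgt pr.1 = (j:ℤ) ∧ hgt pr.2 = (j:ℤ)+1) ∨
       (hgt pr.1 = (j:ℤ)+1 ∧ hgt pr.2 = (j:ℤ)))) := by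
  rw [Upart, Finset.mem_union, Finset.mem_union, Finset.mem_product, Finset.mem_product,
    Finset.mem_product]
  simp only [mem_Ejs]
  push_cast
  tauto

lemma card_U (n j ℓ : ℕ) :
    (Upart n j ℓ).card = ejc j ℓ * ejc j (2*n - ℓ) + ejc j ℓ * ejc (j+1) (2*n - ℓ)
      + ejc (j+1) ℓ * ejc j (2*n - ℓ) := by
  rw [Upart, Finset.card_union_of_disjoint, Finset.card_union_of_disjoint]
  · rw [Finset.card_product, Finset.card_product, Finset.card_product]
    rfl
  · rw [Finset.disjoint_left]
    rintro ⟨p, q⟩ h1 h2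
    rw [Finset.mem_product, mem_Ejs, mem_Ejs] at h1 h2
    have e1 := h1.2.2.2
    have e2 := h2.2.2.2
    push_cast at e1 e2
    omega
  · rw [Finset.disjoint_left]
    rintro ⟨p, q⟩ h1 h2
    rw [Finset.mem_union, Finset.mem_product, Finset.mem_product] at h1
    rw [Finset.mem_product, mem_Ejs] at h2
    have e2 := h2.1.2.2
    rcases h1 with h1 | h1 <;> [
      (rw [mem_Ejs] at h1; have e1 := h1.1.2.2; push_cast at e1 e2; omega);
      (rw [mem_Ejs] at h1; have e1 := h1.1.2.2; push_cast at e1 e2; omega)]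

noncomputable def PairsT (n : ℕ) : Finset (List Bool × List Bool) :=
  ((range (n+1)) ×ˢ (range (2*n+1))).biUnion (fun x => Upart n x.1 x.2)

lemma pairsT_disjoint (n : ℕ) : ∀ x ∈ (range (n+1)) ×ˢ (range (2*n+1)),
    ∀ y ∈ (range (n+1)) ×ˢ (range (2*n+1)), x ≠ y →
      Disjoint (Upart n x.1 x.2) (Upart n y.1 y.2) := by
  rintro ⟨j, ℓ⟩ _ ⟨j', ℓ'⟩ _ hne
  rw [Finset.disjoint_left]
  intro pr h1 h2
  rw [mem_U] at h1 h2
  apply hne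
  have hℓ : ℓ = ℓ' := by omega
  have hj : j = j' := by omega
  rw [hℓ, hj]

lemma card_pairsT (n : ℕ) :
    ((PairsT n).card : ℚ) =
      ∑ j ∈ range (n+1), ∑ ℓ ∈ range (2*n+1),
        ((ejc j ℓ * ejc j (2*n - ℓ) + ejc j ℓ * ejc (j+1) (2*n - ℓ)
          + ejc (j+1) ℓ * ejc j (2*n - ℓ) : ℕ) : ℚ) := by
  rw [PairsT, Finset.card_biUnion (pairsT_disjoint n)]
  push_cast
  rw [Finset.sum_product]
  apply Finset.sum_congr rfl
  intro j _
  apply Finset.sum_congr rfl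
  intro ℓ _
  rw [card_U]
  push_cast
  ring

lemma coeff_EE (j k M : ℕ) :
    (PowerSeries.coeff M) (Es j * Es k) =
      ∑ ℓ ∈ range (M+1), (ejc j ℓ : ℚ) * (ejc k (M - ℓ) : ℚ) := by
  rw [PowerSeries.coeff_mul, Finset.Nat.sum_antidiagonal_eq_sum_range_succ_mk]
  apply Finset.sum_congr rfl
  intro ℓ _
  rw [coeff_Es, coeff_Es]

lemma sum_reflect (M : ℕ) (f g : ℕ → ℚ) :
    ∑ ℓ ∈ range (M+1), f ℓ * g (M - ℓ) = ∑ ℓ ∈ range (M+1), g ℓ * f (M - ℓ) := by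
  rw [← Finset.sum_range_reflect]
  apply Finset.sum_congr rfl
  intro ℓ hℓ
  have hℓ' := Finset.mem_range.1 hℓ
  rw [show M + 1 - 1 - ℓ = M - ℓ from by omega, show M - (M - ℓ) = ℓ from by omega]
  ring

lemma card_pairsT_coeff (n : ℕ) :
    ((PairsT n).card : ℚ) =
      (PowerSeries.coeff (2*n)) (∑ j ∈ range (n+1), (Es j^2 + 2 * Es j * Es (j+1))) := by
  rw [card_pairsT, map_sum]
  apply Finset.sum_congr rfl
  intro j _
  rw [map_add, pow_two, coeff_EE j j (2*n)]
  have h2 : (PowerSeries.coeff (2*n)) (2 * Es j * Es (j+1))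
      = 2 * ∑ ℓ ∈ range (2*n+1), (ejc j ℓ : ℚ) * (ejc (j+1) (2*n - ℓ) : ℚ) := by
    rw [show (2 : PowerSeries ℚ) * Es j * Es (j+1) = PowerSeries.C 2 * (Es j * Es (j+1))
        from by rw [map_ofNat]; ring, PowerSeries.coeff_C_mul, coeff_EE j (j+1) (2*n)]
  have hrefl : ∑ ℓ ∈ range (2*n+1), (ejc j ℓ : ℚ) * (ejc (j+1) (2*n - ℓ) : ℚ)
      = ∑ ℓ ∈ range (2*n+1), (ejc (j+1) ℓ : ℚ) * (ejc j (2*n - ℓ) : ℚ) := by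
    simpa using sum_reflect (2*n) (fun m => (ejc j m : ℚ)) (fun m => (ejc (j+1) m : ℚ))
  rw [h2]
  rw [show (2:ℚ) * ∑ ℓ ∈ range (2*n+1), (ejc j ℓ : ℚ) * (ejc (j+1) (2*n - ℓ) : ℚ)
      = ∑ ℓ ∈ range (2*n+1), (ejc j ℓ : ℚ) * (ejc (j+1) (2*n - ℓ) : ℚ)
        + ∑ ℓ ∈ range (2*n+1), (ejc (j+1) ℓ : ℚ) * (ejc j (2*n - ℓ) : ℚ) from by
    rw [two_mul]
    nth_rewrite 2 [hrefl]
    rfl]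
  rw [← Finset.sum_add_distrib, ← Finset.sum_add_distrib]
  apply Finset.sum_congr rfl
  intro ℓ _
  push_cast
  ring

/-! ### Arithmetic -/

lemma catalan_formula (m : ℕ) :
    (catalan m : ℚ) = (Nat.factorial (2*m) : ℚ) /
      ((Nat.factorial m : ℚ) * (Nat.factorial m : ℚ) * ((m : ℚ)+1)) := by
  have h1 : ((m : ℚ)+1) * (catalan m : ℚ) = (Nat.centralBinom m : ℚ) := by
    exact_mod_cast congrArg (Nat.cast : ℕ → ℚ) (succ_mul_catalan_eq_centralBinom m)
  have h2 : (Nat.centralBinom m : ℚ)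
      = (Nat.factorial (2*m) : ℚ) / ((Nat.factorial m : ℚ) * (Nat.factorial m : ℚ)) := by
    rw [Nat.centralBinom, Nat.cast_choose ℚ (by omega : m ≤ 2*m),
      show 2*m - m = m from by omega]
  have hm1 : ((m:ℚ)+1) ≠ 0 := by positivity
  have hf : (Nat.factorial m : ℚ) ≠ 0 := by
    exact_mod_cast Nat.factorial_ne_zero m
  field_simp at h2 ⊢
  nlinarith [h1, h2]

lemma T_two_formula (n : ℕ) : T 2 n = 4*(catalan n : ℚ) - (catalan (n+1) : ℚ) := by
  rw [T, catalan_formula n, catalan_formula (n+1)]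
  have hf : ∀ m : ℕ, (Nat.factorial m : ℚ) ≠ 0 := fun m => by
    exact_mod_cast Nat.factorial_ne_zero m
  have e1 : (Nat.factorial (n+1) : ℚ) = ((n:ℚ)+1) * (Nat.factorial n : ℚ) := by
    rw [Nat.factorial_succ]; push_cast; ring
  have e2 : (Nat.factorial (n+2) : ℚ) = ((n:ℚ)+2) * ((n:ℚ)+1) * (Nat.factorial n : ℚ) := by
    rw [Nat.factorial_succ, Nat.factorial_succ]; push_cast; ring
  have e3 : (Nat.factorial (2*(n+1)) : ℚ)
      = (2*(n:ℚ)+2) * (2*(n:ℚ)+1) * (Nat.factorial (2*n) : ℚ) := by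
    rw [show 2*(n+1) = (2*n+1)+1 from by omega, Nat.factorial_succ, Nat.factorial_succ]
    push_cast; ring
  have e4 : (Nat.factorial (2*2) : ℚ) = 24 := by norm_num [Nat.factorial]
  have e5 : (Nat.factorial 2 : ℚ) = 2 := by norm_num [Nat.factorial]
  rw [show (2:ℕ)+n = n+2 from by omega]
  rw [e1, e2, e3, e4, e5]
  have h1 : ((n:ℚ)+1) ≠ 0 := by positivity
  have h2 : ((n:ℚ)+2) ≠ 0 := by positivity
  have h3 : (2*(n:ℚ)+2) ≠ 0 := by positivity
  field_simp
  push_cast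
  ring

end SuperCat

theorem T_two_eq_pairs_of_dyck_paths (n : ℕ) (hn : 0 < n) :
    T 2 n =
      ({pr : List Bool × List Bool | IsDyck pr.1 ∧ IsDyck pr.2 ∧
          pr.1.length + pr.2.length = 2 * n ∧
          |hgt pr.1 - hgt pr.2| ≤ 1}.ncard : ℚ) := by
  classical
  have hset : {pr : List Bool × List Bool | IsDyck pr.1 ∧ IsDyck pr.2 ∧
      pr.1.length + pr.2.length = 2 * n ∧ |hgt pr.1 - hgt pr.2| ≤ 1}
      = ↑(SuperCat.PairsT n) := by
    ext pr
    rw [Set.mem_setOf_eq, Finset.mem_coe, SuperCat.PairsT, Finset.mem_biUnion]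
    constructor
    · rintro ⟨hd1, hd2, hlen, habs⟩
      rw [abs_le] at habs
      have ha0 := SuperCat.hgt_nonneg pr.1
      have hb0 := SuperCat.hgt_nonneg pr.2
      have hale : hgt pr.1 ≤ (n : ℤ) :=
        SuperCat.hgt_le_of_length_le hd1 (by omega : pr.1.length ≤ 2*n)
      have hj : (((min (hgt pr.1) (hgt pr.2)).toNat : ℤ)) = min (hgt pr.1) (hgt pr.2) :=
        Int.toNat_of_nonneg (le_min ha0 hb0)
      refine ⟨((min (hgt pr.1) (hgt pr.2)).toNat, pr.1.length),
        Finset.mem_product.2 ⟨Finset.mem_range.2 ?_, Finset.mem_range.2 (by omega)⟩,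
        SuperCat.mem_U.2 ⟨rfl, by omega, hd1, hd2, ?_⟩⟩
      · have hmin : min (hgt pr.1) (hgt pr.2) ≤ hgt pr.1 := min_le_left _ _
        omega
      · have h1 : min (hgt pr.1) (hgt pr.2) ≤ hgt pr.1 := min_le_left _ _
        have h2 : min (hgt pr.1) (hgt pr.2) ≤ hgt pr.2 := min_le_right _ _
        have h3 : min (hgt pr.1) (hgt pr.2) = hgt pr.1 ∨
            min (hgt pr.1) (hgt pr.2) = hgt pr.2 := min_choice _ _
        omega
    · rintro ⟨⟨j, ℓ⟩, hx, hU⟩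
      rw [Finset.mem_product, Finset.mem_range, Finset.mem_range] at hx
      rw [SuperCat.mem_U] at hU
      obtain ⟨hl1, hl2, hd1, hd2, hcase⟩ := hU
      refine ⟨hd1, hd2, by omega, ?_⟩
      rw [abs_le]
      omega
  rw [hset, Set.ncard_coe_finset, SuperCat.card_pairsT_coeff n, SuperCat.coeff_main n hn,
    SuperCat.T_two_formula n, ← SuperCat.dl_catalan n, ← SuperCat.dl_catalan (n+1),
    show 2*(n+1) = 2*n+2 from by omega]
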